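/- Let d ≥ 3 and 0 < s < d−2. There exist constants C > 0 and ε₀ > 0 (depending only on s and d) such that: for all x₀, y₀ ∈ 𝕊^d with geodesic distance θ₀ = arccos⟨x₀,y₀⟩ > 0 and all ε with 0 < ε ≤ min(ε₀, θ₀/2), one has ∫_{B_g(x₀,ε)} K_s(x,y₀) dσ(x) ≥ σ(B_g(x₀,ε))·K_s(x₀,y₀) + C·(s + 2 − 2d)·(1 − cos(θ₀/2))^{−s/2 − 1}·ε^{d+2}, where B_g(x₀,ε) = {x ∈ 𝕊^d : arccos⟨x,x₀⟩ < ε} is the open geodesic ball. -/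

import Mathlib

open MeasureTheory Finset
open scoped InnerProductSpace

/-- The Riesz `s`-kernel (for `s ≠ 0`): `K_s(x,y) = (1/s)‖x-y‖^{-s}`. -/
noncomputable def rieszK (s : ℝ) {E : Type*} [NormedAddCommGroup E] (x y : E) : ℝ :=
  (1 / s) * ‖x - y‖ ^ (-s)

/-- The normalized uniform surface measure `σ` on the unit sphere `𝕊^d ⊂ ℝ^{d+1}`
(the normalized `d`-dimensional Hausdorff measure restricted to the sphere). -/
noncomputable def sphereSigma (d : ℕ) : Measure (EuclideanSpace ℝ (Fin (d + 1))) :=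
  (μH[(d : ℝ)] (Metric.sphere (0 : EuclideanSpace ℝ (Fin (d + 1))) 1))⁻¹ •
    (μH[(d : ℝ)]).restrict (Metric.sphere (0 : EuclideanSpace ℝ (Fin (d + 1))) 1)

/-- The Wiener constant `I_{s,d} = ∫_{𝕊^d} K_s(x,y) dσ(y)` (independent of `x ∈ 𝕊^d`,
computed here at the north pole). -/
noncomputable def wienerRiesz (d : ℕ) (s : ℝ) : ℝ :=
  ∫ y, rieszK s (EuclideanSpace.single (0 : Fin (d + 1)) (1 : ℝ)) y ∂(sphereSigma d)


/-- Tangent line inequality for `y ↦ y^p`, `p < 0`, at `y = 1`. -/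
lemma rpow_tangent_one {y p : ℝ} (hy : 0 < y) (hp : p < 0) :
    1 - p + p * y ≤ y ^ p := by
  have h1p : 0 < 1 - p := by linarith
  have hAM := Real.geom_mean_le_arith_mean2_weighted
    (w₁ := 1 / (1 - p)) (w₂ := -p / (1 - p)) (p₁ := y ^ p) (p₂ := y)
    (by positivity) (div_nonneg (by linarith) h1p.le) (Real.rpow_nonneg hy.le p) hy.le
    (by field_simp; ring)
  have h2 : (y ^ p) ^ (1 / (1 - p)) * y ^ (-p / (1 - p)) = 1 := by
    rw [← Real.rpow_mul hy.le, ← Real.rpow_add hy]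
    rw [show p * (1 / (1 - p)) + -p / (1 - p) = 0 by field_simp; ring]
    exact Real.rpow_zero y
  rw [h2] at hAM
  have h3 := mul_le_mul_of_nonneg_left hAM h1p.le
  have h4 : (1 - p) * (1 / (1 - p) * y ^ p + -p / (1 - p) * y) = y ^ p + -p * y := by
    field_simp
  rw [h4, mul_one] at h3
  linarith

/-- Tangent line inequality for `u ↦ u^p`, `p < 0`. -/
lemma rpow_tangent {u v p : ℝ} (hu : 0 < u) (hv : 0 < v) (hp : p < 0) :
    u ^ p + p * u ^ (p - 1) * (v - u) ≤ v ^ p := by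
  have h := rpow_tangent_one (y := v / u) (by positivity) hp
  have hvu : (v / u) ^ p = v ^ p / u ^ p := Real.div_rpow hv.le hu.le p
  have hup : 0 < u ^ p := Real.rpow_pos_of_pos hu p
  have hup1 : u ^ (p - 1) = u ^ p / u := by
    rw [Real.rpow_sub hu, Real.rpow_one]
  rw [hvu] at h
  rw [hup1]
  have h' := mul_le_mul_of_nonneg_left h hup.le
  calc u ^ p + p * (u ^ p / u) * (v - u)
      = u ^ p * (1 - p + p * (v / u)) := by field_simp; ring
    _ ≤ u ^ p * (v ^ p / u ^ p) := h'
    _ = v ^ p := by field_simp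

/-- Midpoint convexity for `u ↦ u^p`, `p < 0`. -/
lemma rpow_midpoint {u v p : ℝ} (hu : 0 < u) (hv : 0 < v) (hp : p < 0) :
    2 * ((u + v) / 2) ^ p ≤ u ^ p + v ^ p := by
  have hw : 0 < (u + v) / 2 := by linarith
  have h1 := rpow_tangent hw hu hp
  have h2 := rpow_tangent hw hv hp
  nlinarith [h1, h2]
open Real


/-- Core real inequality: second-order lower bound after symmetrization. -/
lemma key_real (s : ℝ) (hs0 : 0 < s) {t₀ c a b β ε : ℝ}
    (hab : a + b = 2 * c * t₀) (haβ : a ≤ β) (hbβ : b ≤ β) (ht₀β : t₀ ≤ β)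
    (hβ : β < 1) (hc1 : c ≤ 1) (hc : 1 - c ≤ ε ^ 2 / 2) (ht₀ : t₀ ≤ 1) :
    2 * ((1 / s) * (2 - 2 * t₀) ^ (-s / 2)) - ε ^ 2 * (1 - β) ^ (-s / 2 - 1) ≤
      (1 / s) * (2 - 2 * a) ^ (-s / 2) + (1 / s) * (2 - 2 * b) ^ (-s / 2) := by
  set p : ℝ := -s / 2 with hpdef
  have hp : p < 0 := by rw [hpdef]; linarith
  have hβ0 : 0 < 1 - β := by linarith
  have hua : 0 < 2 - 2 * a := by linarith
  have hub : 0 < 2 - 2 * b := by linarith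
  have hu0 : 0 < 2 - 2 * t₀ := by nlinarith
  -- midpoint
  have hmid := rpow_midpoint hua hub hp
  have hw : ((2 - 2 * a) + (2 - 2 * b)) / 2 = 2 - 2 * (c * t₀) := by
    rw [show (2 - 2*a) + (2 - 2*b) = 4 - 2*(a+b) by ring, hab]; ring
  rw [hw] at hmid
  have hwpos : 0 < 2 - 2 * (c * t₀) := by nlinarith
  -- tangent at u₀ = 2 - 2t₀
  have htan := rpow_tangent hu0 hwpos hp
  have hdiff : (2 - 2 * (c * t₀)) - (2 - 2 * t₀) = 2 * t₀ * (1 - c) := by ring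
  rw [hdiff] at htan
  -- bound the first order term
  have hfac : 0 < (2 - 2 * t₀) ^ (p - 1) := Real.rpow_pos_of_pos hu0 _
  have ht0c : t₀ * (1 - c) ≤ ε ^ 2 / 2 := by
    rcases le_or_gt t₀ 0 with h | h
    · nlinarith
    · nlinarith
  have h1 : p * (2 - 2 * t₀) ^ (p - 1) * (2 * t₀ * (1 - c)) ≥
      - s * (ε ^ 2 / 2) * (2 - 2 * t₀) ^ (p - 1) := by
    have : p * (2 * t₀ * (1 - c)) ≥ - s * (ε ^ 2 / 2) := by
      rw [hpdef]; nlinarith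
    nlinarith [hfac]
  -- compare (2-2t₀)^(p-1) with (1-β)^(p-1)
  have h2 : (2 - 2 * t₀) ^ (p - 1) ≤ (1 - β) ^ (p - 1) :=
    Real.rpow_le_rpow_of_nonpos hβ0 (by nlinarith) (by linarith)
  -- combine
  have h3 : (2 - 2 * t₀) ^ p - s * (ε ^ 2 / 2) * (1 - β) ^ (p - 1) ≤ (2 - 2 * (c * t₀)) ^ p := by
    have hk : 0 ≤ s * (ε ^ 2 / 2) := by positivity
    have hmm := mul_le_mul_of_nonneg_left h2 hk
    linarith [htan, h1, hmm]
  have hs' : (0:ℝ) < 1 / s := by positivity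
  have hfin : (1 - β) ^ (p - 1) = (1 - β) ^ (-s / 2 - 1) := by rw [hpdef]
  rw [← hfin]
  have hA := mul_le_mul_of_nonneg_left hmid hs'.le
  have hB := mul_le_mul_of_nonneg_left h3 hs'.le
  have hBeq : (1 / s) * ((2 - 2 * t₀) ^ p - s * (ε ^ 2 / 2) * (1 - β) ^ (p - 1)) =
      (1 / s) * (2 - 2 * t₀) ^ p - (ε ^ 2 / 2) * (1 - β) ^ (p - 1) := by
    field_simp
  rw [hBeq] at hB
  have hAeq : (1 / s) * (2 * (2 - 2 * (c * t₀)) ^ p) = 2 * ((1/s) * (2 - 2 * (c * t₀)) ^ p) := by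
    ring
  have hAeq2 : (1 / s) * ((2 - 2 * a) ^ p + (2 - 2 * b) ^ p) =
      (1 / s) * (2 - 2 * a) ^ p + (1 / s) * (2 - 2 * b) ^ p := by ring
  rw [hAeq, hAeq2] at hA
  linarith [hA, hB]
open MeasureTheory Real
open scoped InnerProductSpace

section InnerLemmas

variable {E : Type*} [NormedAddCommGroup E] [InnerProductSpace ℝ E]

/-- rieszK via inner product, for unit vectors. -/
lemma rieszK_eq_inner (s : ℝ) {x y : E} (hx : ‖x‖ = 1) (hy : ‖y‖ = 1) :
    rieszK s x y = (1 / s) * (2 - 2 * ⟪x, y⟫_ℝ) ^ (-s / 2) := by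
  have hsq : ‖x - y‖ ^ (2:ℕ) = 2 - 2 * ⟪x, y⟫_ℝ := by
    rw [@norm_sub_sq_real]; rw [hx, hy]; ring
  have h1 : ‖x - y‖ ^ (-s) = (‖x - y‖ ^ (2:ℕ)) ^ (-s / 2) := by
    rw [← Real.rpow_natCast (‖x - y‖) 2, ← Real.rpow_mul (norm_nonneg _)]
    norm_num
    rw [show 2 * (-s / 2) = -s by ring]
  rw [rieszK, h1, hsq]

/-- Cauchy–Schwarz bound for the orthogonal parts. -/
lemma inner_decomp_bound {x x₀ y₀ : E} (hx : ‖x‖ = 1) (hx₀ : ‖x₀‖ = 1) (hy₀ : ‖y₀‖ = 1) :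
    |⟪x, y₀⟫_ℝ - ⟪x, x₀⟫_ℝ * ⟪x₀, y₀⟫_ℝ| ≤
      Real.sqrt (1 - ⟪x, x₀⟫_ℝ ^ 2) * Real.sqrt (1 - ⟪x₀, y₀⟫_ℝ ^ 2) := by
  set c := ⟪x, x₀⟫_ℝ
  set t := ⟪x₀, y₀⟫_ℝ
  have hxx : ⟪x₀, x₀⟫_ℝ = 1 := by
    rw [real_inner_self_eq_norm_sq, hx₀]; norm_num
  have hv : ⟪x - c • x₀, y₀ - t • x₀⟫_ℝ = ⟪x, y₀⟫_ℝ - c * t := by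
    rw [inner_sub_left, inner_sub_right, inner_sub_right, real_inner_smul_left,
      real_inner_smul_left, real_inner_smul_right, real_inner_smul_right, hxx]
    have h1 : ⟪x, x₀⟫_ℝ = c := rfl
    have h2 : ⟪x₀, y₀⟫_ℝ = t := rfl
    rw [h1, h2]
    ring
  have hvn : ‖x - c • x₀‖ ^ 2 = 1 - c ^ 2 := by
    rw [@norm_sub_sq_real, real_inner_smul_right, norm_smul, hx, hx₀]
    have h1 : ⟪x, x₀⟫_ℝ = c := rfl
    rw [h1, Real.norm_eq_abs]
    simp only [mul_one, sq_abs]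
    ring
  have hwn : ‖y₀ - t • x₀‖ ^ 2 = 1 - t ^ 2 := by
    rw [@norm_sub_sq_real, real_inner_smul_right, norm_smul, hy₀, hx₀]
    have h2 : ⟪y₀, x₀⟫_ℝ = t := real_inner_comm x₀ y₀
    rw [h2, Real.norm_eq_abs]
    simp only [mul_one, sq_abs]
    ring
  have hCS := abs_real_inner_le_norm (x - c • x₀) (y₀ - t • x₀)
  rw [hv] at hCS
  calc |⟪x, y₀⟫_ℝ - c * t| ≤ ‖x - c • x₀‖ * ‖y₀ - t • x₀‖ := hCS
    _ = Real.sqrt (1 - c ^ 2) * Real.sqrt (1 - t ^ 2) := by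
        rw [← Real.sqrt_sq (norm_nonneg (x - c • x₀)), ← Real.sqrt_sq (norm_nonneg (y₀ - t • x₀)),
          hvn, hwn]
end InnerLemmas

open Real

lemma cos_combo_le {c t₀ : ℝ} (hc : |c| ≤ 1) (ht : |t₀| ≤ 1)
    (hθ : Real.arccos c ≤ Real.arccos t₀ / 2) :
    c * t₀ + Real.sqrt (1 - c ^ 2) * Real.sqrt (1 - t₀ ^ 2) ≤ Real.cos (Real.arccos t₀ / 2) := by
  obtain ⟨hc1, hc2⟩ := abs_le.mp hc
  obtain ⟨ht1, ht2⟩ := abs_le.mp ht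
  have hcc : Real.cos (Real.arccos c) = c := Real.cos_arccos hc1 hc2
  have htt : Real.cos (Real.arccos t₀) = t₀ := Real.cos_arccos ht1 ht2
  have hsc : Real.sin (Real.arccos c) = Real.sqrt (1 - c ^ 2) := Real.sin_arccos c
  have hst : Real.sin (Real.arccos t₀) = Real.sqrt (1 - t₀ ^ 2) := Real.sin_arccos t₀
  have hkey : c * t₀ + Real.sqrt (1 - c ^ 2) * Real.sqrt (1 - t₀ ^ 2) =
      Real.cos (Real.arccos t₀ - Real.arccos c) := by
    rw [Real.cos_sub, hcc, htt, hsc, hst]; ring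
  rw [hkey]
  exact Real.cos_le_cos_of_nonneg_of_le_pi (by linarith [Real.arccos_nonneg t₀])
    (by linarith [Real.arccos_le_pi t₀, Real.arccos_nonneg c])
    (by linarith [Real.arccos_nonneg c])
open MeasureTheory Real Set Metric
open scoped InnerProductSpace ENNReal NNReal

lemma sqrt_one_sub_sq_lip {a b : ℝ} (ha0 : 0 ≤ a) (ha : a ≤ 1/2) (hb0 : 0 ≤ b) (hb : b ≤ 1/2) :
    |Real.sqrt (1 - a^2) - Real.sqrt (1 - b^2)| ≤ |a - b| := by
  have hA := Real.sq_sqrt (show (0:ℝ) ≤ 1 - a^2 by nlinarith)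
  have hB := Real.sq_sqrt (show (0:ℝ) ≤ 1 - b^2 by nlinarith)
  have hA0 := Real.sqrt_nonneg (1 - a^2)
  have hB0 := Real.sqrt_nonneg (1 - b^2)
  have hA1 : (1:ℝ)/2 ≤ Real.sqrt (1 - a^2) := by nlinarith
  have hB1 : (1:ℝ)/2 ≤ Real.sqrt (1 - b^2) := by nlinarith
  rw [abs_le]
  constructor <;> rcases abs_cases (a - b) with ⟨h, _⟩ | ⟨h, _⟩ <;> rw [h] <;> nlinarith

noncomputable section
variable (d : ℕ)

local notation "E" => EuclideanSpace ℝ (Fin (d+1))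

lemma cap_measure_le (hd : 1 ≤ d) :
    ∃ A : ℝ≥0∞, A ≠ ∞ ∧ ∀ (x₀ : E), ‖x₀‖ = 1 →
      ∀ ε : ℝ, 0 < ε → ε ≤ 1/2 →
      μH[(d:ℝ)] {x : E | x ∈ Metric.sphere (0 : E) 1 ∧ Real.arccos ⟪x, x₀⟫_ℝ < ε}
        ≤ A * ENNReal.ofReal (ε ^ d) := by
  classical
  set κ : ℝ≥0 := (Fintype.card (Fin d) : ℝ≥0) ^ ((1 / (2:ℝ≥0∞)).toReal) with hκ
  refine ⟨(2:ℝ≥0∞) ^ (d:ℝ) * (κ:ℝ≥0∞) ^ (d:ℝ) * ENNReal.ofReal (2 ^ d), ?_, ?_⟩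
  · apply ENNReal.mul_ne_top (ENNReal.mul_ne_top ?_ ?_) ENNReal.ofReal_ne_top
    · exact ENNReal.rpow_ne_top_of_nonneg (by positivity) (by norm_num)
    · exact ENNReal.rpow_ne_top_of_nonneg (by positivity) ENNReal.coe_ne_top
  intro x₀ hx₀ ε hε0 hε
  haveI : Fact (Module.finrank ℝ (EuclideanSpace ℝ (Fin (d+1))) = d+1) :=
    ⟨finrank_euclideanSpace_fin⟩
  have hx₀ne : x₀ ≠ 0 := by intro h; rw [h, norm_zero] at hx₀; norm_num at hx₀
  set b := OrthonormalBasis.fromOrthogonalSpanSingleton (𝕜 := ℝ) d hx₀ne with hb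
  set ψ : EuclideanSpace ℝ (Fin d) → E :=
    fun w => Real.sqrt (1 - ‖w‖^2) • x₀ + ((b.repr.symm w : (ℝ ∙ x₀)ᗮ) : E) with hψ
  have hx₀x₀ : ⟪x₀, x₀⟫_ℝ = 1 := by
    rw [real_inner_self_eq_norm_sq, hx₀]; norm_num
  -- covering
  have hcover : {x : E | x ∈ Metric.sphere (0 : E) 1 ∧ Real.arccos ⟪x, x₀⟫_ℝ < ε}
      ⊆ ψ '' (Metric.closedBall 0 ε) := by
    rintro x ⟨hxS, hxθ⟩
    have hxn : ‖x‖ = 1 := by rwa [mem_sphere_zero_iff_norm] at hxS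
    set c := ⟪x, x₀⟫_ℝ with hc
    have hcabs : |c| ≤ 1 := by
      have h := abs_real_inner_le_norm x x₀
      rw [hxn, hx₀] at h; simpa using h
    have hcos : Real.cos (Real.arccos c) = c :=
      Real.cos_arccos (abs_le.mp hcabs).1 (abs_le.mp hcabs).2
    have hθnn : 0 ≤ Real.arccos c := Real.arccos_nonneg c
    have hcpos : 0 < c := by
      rw [← hcos]
      apply Real.cos_pos_of_mem_Ioo
      constructor
      · linarith [Real.pi_gt_three]
      · have : Real.arccos c < 1/2 := lt_of_lt_of_le hxθ hε
        linarith [Real.pi_gt_three]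
    have hvmem : x - c • x₀ ∈ (ℝ ∙ x₀)ᗮ := by
      rw [Submodule.mem_orthogonal_singleton_iff_inner_right, inner_sub_right,
        real_inner_smul_right, hx₀x₀, real_inner_comm]
      simp [hc]
    set v : (ℝ ∙ x₀)ᗮ := ⟨x - c • x₀, hvmem⟩ with hv
    have hvnE : ‖x - c • x₀‖^2 = 1 - c^2 := by
      rw [@norm_sub_sq_real, real_inner_smul_right, norm_smul, hxn, hx₀, Real.norm_eq_abs]
      simp only [mul_one, sq_abs]
      have h1 : ⟪x, x₀⟫_ℝ = c := rfl
      rw [h1]; ring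
    have hvn : ‖v‖^2 = 1 - c^2 := by
      rw [hv]
      simpa using hvnE
    have hvnorm : ‖v‖ ≤ ε := by
      have h1 : ‖v‖ = Real.sqrt (1 - c^2) := by
        rw [← Real.sqrt_sq (norm_nonneg v), hvn]
      have h2 : Real.sqrt (1 - c^2) = Real.sin (Real.arccos c) := (Real.sin_arccos c).symm
      rw [h1, h2]
      calc Real.sin (Real.arccos c) ≤ Real.arccos c := Real.sin_le hθnn
        _ ≤ ε := hxθ.le
    refine ⟨b.repr v, ?_, ?_⟩
    · rw [Metric.mem_closedBall, dist_zero_right, b.repr.norm_map]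
      exact hvnorm
    · rw [hψ]
      simp only
      rw [b.repr.symm_apply_apply, b.repr.norm_map, hvn]
      have : Real.sqrt (1 - (1 - c^2)) = c := by
        rw [show 1 - (1 - c^2) = c^2 by ring, Real.sqrt_sq hcpos.le]
      rw [this, hv]
      simp
  -- Lipschitz
  have hlip : LipschitzOnWith 2 ψ (Metric.closedBall 0 ε) := by
    rw [lipschitzOnWith_iff_dist_le_mul]
    intro w₁ h₁ w₂ h₂
    rw [Metric.mem_closedBall, dist_zero_right] at h₁ h₂
    have hw₁ : ‖w₁‖ ≤ 1/2 := le_trans h₁ hε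
    have hw₂ : ‖w₂‖ ≤ 1/2 := le_trans h₂ hε
    rw [dist_eq_norm, dist_eq_norm]
    have hψsub : ψ w₁ - ψ w₂ =
        (Real.sqrt (1 - ‖w₁‖^2) - Real.sqrt (1 - ‖w₂‖^2)) • x₀ +
          ((b.repr.symm w₁ - b.repr.symm w₂ : (ℝ ∙ x₀)ᗮ) : E) := by
      rw [hψ]
      simp only [sub_smul, Submodule.coe_sub]
      abel
    rw [hψsub]
    have hnorm1 : ‖(Real.sqrt (1 - ‖w₁‖^2) - Real.sqrt (1 - ‖w₂‖^2)) • x₀‖ ≤ ‖w₁ - w₂‖ := by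
      rw [norm_smul, hx₀, mul_one, Real.norm_eq_abs]
      calc |Real.sqrt (1 - ‖w₁‖^2) - Real.sqrt (1 - ‖w₂‖^2)| ≤ |‖w₁‖ - ‖w₂‖| :=
            sqrt_one_sub_sq_lip (norm_nonneg _) hw₁ (norm_nonneg _) hw₂
        _ ≤ ‖w₁ - w₂‖ := abs_norm_sub_norm_le w₁ w₂
    have hnorm2 : ‖((b.repr.symm w₁ - b.repr.symm w₂ : (ℝ ∙ x₀)ᗮ) : E)‖ = ‖w₁ - w₂‖ := by
      rw [← Submodule.coe_norm, ← map_sub, b.repr.symm.norm_map]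
    calc ‖(Real.sqrt (1 - ‖w₁‖^2) - Real.sqrt (1 - ‖w₂‖^2)) • x₀ +
          ((b.repr.symm w₁ - b.repr.symm w₂ : (ℝ ∙ x₀)ᗮ) : E)‖
        ≤ ‖(Real.sqrt (1 - ‖w₁‖^2) - Real.sqrt (1 - ‖w₂‖^2)) • x₀‖ +
          ‖((b.repr.symm w₁ - b.repr.symm w₂ : (ℝ ∙ x₀)ᗮ) : E)‖ := norm_add_le _ _
      _ ≤ ‖w₁ - w₂‖ + ‖w₁ - w₂‖ := by rw [hnorm2]; linarith [hnorm1]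
      _ = (2:ℝ≥0) * ‖w₁ - w₂‖ := by push_cast; ring
  -- measure chain
  have h1 : μH[(d:ℝ)] {x : E | x ∈ Metric.sphere (0 : E) 1 ∧ Real.arccos ⟪x, x₀⟫_ℝ < ε}
      ≤ μH[(d:ℝ)] (ψ '' Metric.closedBall 0 ε) := measure_mono hcover
  have h2 := hlip.hausdorffMeasure_image_le (show (0:ℝ) ≤ (d:ℝ) by positivity)
  have hlipf : LipschitzWith κ ((WithLp.equiv 2 (Fin d → ℝ)).symm) :=
    PiLp.lipschitzWith_toLp 2 (fun _ : Fin d => ℝ)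
  have hsub : Metric.closedBall (0 : EuclideanSpace ℝ (Fin d)) ε ⊆
      (WithLp.equiv 2 (Fin d → ℝ)).symm '' (Metric.closedBall (0 : Fin d → ℝ) ε) := by
    intro x hx
    refine ⟨WithLp.equiv 2 _ x, ?_, (WithLp.equiv 2 _).symm_apply_apply x⟩
    rw [Metric.mem_closedBall] at hx ⊢
    have hl := (PiLp.lipschitzWith_ofLp 2 (fun _ : Fin d => ℝ)).dist_le_mul x 0
    simp only [NNReal.coe_one, one_mul] at hl
    calc dist (WithLp.equiv 2 _ x) 0 = dist (WithLp.equiv 2 _ x) (WithLp.equiv 2 _ 0) := by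
          norm_num
      _ ≤ dist x 0 := by exact_mod_cast hl
      _ ≤ ε := hx
  have h3 : μH[(d:ℝ)] (Metric.closedBall (0 : EuclideanSpace ℝ (Fin d)) ε)
      ≤ (κ:ℝ≥0∞) ^ (d:ℝ) * ENNReal.ofReal ((2*ε)^d) := by
    calc μH[(d:ℝ)] (Metric.closedBall (0 : EuclideanSpace ℝ (Fin d)) ε)
        ≤ μH[(d:ℝ)] ((WithLp.equiv 2 (Fin d → ℝ)).symm '' (Metric.closedBall (0 : Fin d → ℝ) ε)) :=
          measure_mono hsub
      _ ≤ (κ:ℝ≥0∞) ^ (d:ℝ) * μH[(d:ℝ)] (Metric.closedBall (0 : Fin d → ℝ) ε) :=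
          hlipf.hausdorffMeasure_image_le (by positivity) _
      _ = (κ:ℝ≥0∞) ^ (d:ℝ) * ENNReal.ofReal ((2*ε)^d) := by
          congr 1
          have hμ : (μH[(d:ℝ)] : Measure (Fin d → ℝ)) = volume := by
            have := MeasureTheory.hausdorffMeasure_pi_real (ι := Fin d)
            rwa [Fintype.card_fin] at this
          rw [hμ, Real.volume_pi_closedBall 0 hε0.le, Fintype.card_fin]
  calc μH[(d:ℝ)] {x : E | x ∈ Metric.sphere (0 : E) 1 ∧ Real.arccos ⟪x, x₀⟫_ℝ < ε}
      ≤ (2:ℝ≥0∞) ^ (d:ℝ) * μH[(d:ℝ)] (Metric.closedBall (0 : EuclideanSpace ℝ (Fin d)) ε) := by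
        refine le_trans h1 (le_trans h2 ?_)
        gcongr
        norm_num
    _ ≤ (2:ℝ≥0∞) ^ (d:ℝ) * ((κ:ℝ≥0∞) ^ (d:ℝ) * ENNReal.ofReal ((2*ε)^d)) := by gcongr
    _ = (2:ℝ≥0∞) ^ (d:ℝ) * (κ:ℝ≥0∞) ^ (d:ℝ) * ENNReal.ofReal (2 ^ d) * ENNReal.ofReal (ε ^ d) := by
        rw [show (2*ε)^d = 2^d * ε^d by rw [mul_pow], ENNReal.ofReal_mul (by positivity)]
        ring
end


open MeasureTheory Real Set Metric
open scoped InnerProductSpace ENNReal NNReal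

set_option maxHeartbeats 1000000 in
/-- mean-value lower bound for the Riesz `s`-kernel over geodesic
balls on `𝕊^d`, `d ≥ 3`, `0 < s < d - 2`. Here the geodesic ball is
`B_g(x₀,ε) = {x ∈ 𝕊^d : arccos⟨x,x₀⟩ < ε}` and `θ₀ = arccos⟨x₀,y₀⟩`. -/
theorem riesz_kernel_geodesic_ball_mean_value
    (d : ℕ) (hd : 3 ≤ d) (s : ℝ) (hs0 : 0 < s) (hs1 : s < (d : ℝ) - 2) :
    ∃ C > 0, ∃ ε₀ > 0, ∀ x₀ y₀ : EuclideanSpace ℝ (Fin (d + 1)),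
      x₀ ∈ Metric.sphere (0 : EuclideanSpace ℝ (Fin (d + 1))) 1 →
      y₀ ∈ Metric.sphere (0 : EuclideanSpace ℝ (Fin (d + 1))) 1 →
      0 < Real.arccos ⟪x₀, y₀⟫_ℝ →
      ∀ ε : ℝ, 0 < ε → ε ≤ min ε₀ (Real.arccos ⟪x₀, y₀⟫_ℝ / 2) →
        (sphereSigma d {x | x ∈ Metric.sphere (0 : EuclideanSpace ℝ (Fin (d + 1))) 1 ∧
              Real.arccos ⟪x, x₀⟫_ℝ < ε}).toReal * rieszK s x₀ y₀ +
            C * (s + 2 - 2 * (d : ℝ)) *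
              (1 - Real.cos (Real.arccos ⟪x₀, y₀⟫_ℝ / 2)) ^ (-s / 2 - 1) * ε ^ (d + 2) ≤
          ∫ x in {x | x ∈ Metric.sphere (0 : EuclideanSpace ℝ (Fin (d + 1))) 1 ∧
              Real.arccos ⟪x, x₀⟫_ℝ < ε}, rieszK s x y₀ ∂(sphereSigma d) := by
  classical
  have hd3 : (3:ℝ) ≤ (d:ℝ) := by exact_mod_cast hd
  have hu : (0:ℝ) < 2*(d:ℝ) - 2 - s := by linarith
  obtain ⟨A, hAtop, hAcap⟩ := cap_measure_le d (le_trans (by norm_num) hd)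
  set S : Set (EuclideanSpace ℝ (Fin (d+1))) := Metric.sphere 0 1 with hSdef
  have hSmeas : MeasurableSet S := Metric.isClosed_sphere.measurableSet
  set m := μH[(d:ℝ)] S with hm
  set Areal : ℝ := (m⁻¹ * A).toReal with hArealdef
  have hAreal0 : 0 ≤ Areal := ENNReal.toReal_nonneg
  refine ⟨Areal / (2*(2*(d:ℝ)-2-s)) + 1, by positivity, 1/2, by norm_num, ?_⟩
  intro x₀ y₀ hx₀S hy₀S hθ₀pos ε hε0 hεle
  have hε2 : ε ≤ 1/2 := le_trans hεle (min_le_left _ _)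
  have hεθ : ε ≤ Real.arccos ⟪x₀, y₀⟫_ℝ / 2 := le_trans hεle (min_le_right _ _)
  have hx₀ : ‖x₀‖ = 1 := by rwa [mem_sphere_zero_iff_norm] at hx₀S
  have hy₀ : ‖y₀‖ = 1 := by rwa [mem_sphere_zero_iff_norm] at hy₀S
  set t₀ : ℝ := ⟪x₀, y₀⟫_ℝ with ht₀def
  set θ₀ : ℝ := Real.arccos t₀ with hθ₀def
  set β : ℝ := Real.cos (θ₀ / 2) with hβdef
  set W : ℝ := (1 - β) ^ (-s/2 - 1) with hWdef
  set B : Set (EuclideanSpace ℝ (Fin (d+1))) :=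
    {x | x ∈ Metric.sphere (0 : EuclideanSpace ℝ (Fin (d + 1))) 1 ∧
      Real.arccos ⟪x, x₀⟫_ℝ < ε} with hBdef
  -- basic facts about t₀, β
  have ht₀abs : |t₀| ≤ 1 := by
    have h := abs_real_inner_le_norm x₀ y₀
    rw [hx₀, hy₀] at h; simpa using h
  have hθ₀pi : θ₀ ≤ π := Real.arccos_le_pi t₀
  have hθ₀nn : 0 ≤ θ₀ := Real.arccos_nonneg t₀
  have ht₀cos : Real.cos θ₀ = t₀ := Real.cos_arccos (abs_le.mp ht₀abs).1 (abs_le.mp ht₀abs).2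
  have hβlt : β < 1 := by
    have h := Real.strictAntiOn_cos (Set.mem_Icc.mpr ⟨le_refl (0:ℝ), Real.pi_pos.le⟩)
      (Set.mem_Icc.mpr ⟨by linarith, by linarith⟩) (by linarith : (0:ℝ) < θ₀/2)
    simpa using h
  have ht₀β : t₀ ≤ β := by
    rw [← ht₀cos, hβdef]
    exact Real.cos_le_cos_of_nonneg_of_le_pi (by linarith) (by linarith) (by linarith)
  have hWpos : 0 < W := Real.rpow_pos_of_pos (by linarith) _
  -- measurability of B
  have hBmeas : MeasurableSet B := by
    have : B = S ∩ (fun x => Real.arccos ⟪x, x₀⟫_ℝ) ⁻¹' (Set.Iio ε) := rfl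
    rw [this]
    exact hSmeas.inter ((Real.continuous_arccos.comp
      (continuous_id.inner continuous_const)).measurable measurableSet_Iio)
  have hBsubS : B ⊆ S := fun x hx => hx.1
  -- measure of B
  have hcap : μH[(d:ℝ)] B ≤ A * ENNReal.ofReal (ε ^ d) := hAcap x₀ hx₀ ε hε0 hε2
  have hσB_eq : sphereSigma d B = m⁻¹ * μH[(d:ℝ)] B := by
    rw [sphereSigma, Measure.smul_apply, Measure.restrict_apply hBmeas,
      Set.inter_eq_self_of_subset_left hBsubS, smul_eq_mul]
  have hσB_le_e : sphereSigma d B ≤ m⁻¹ * (A * ENNReal.ofReal (ε ^ d)) := by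
    rw [hσB_eq]; exact mul_le_mul_right hcap _
  have hσB_ne_top : sphereSigma d B ≠ ∞ := by
    rcases eq_or_ne m 0 with hm0 | hm0
    · have hS0 : μH[(d:ℝ)] S = 0 := by rw [← hm]; exact hm0
      have hB0 : μH[(d:ℝ)] B = 0 :=
        le_antisymm (hS0 ▸ measure_mono hBsubS) (by simp)
      rw [hσB_eq, hB0, mul_zero]
      exact ENNReal.zero_ne_top
    · exact ne_top_of_le_ne_top (ENNReal.mul_ne_top (ENNReal.inv_ne_top.mpr hm0)
        (ENNReal.mul_ne_top hAtop ENNReal.ofReal_ne_top)) hσB_le_e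
  have hσB_toReal : (sphereSigma d B).toReal ≤ Areal * ε ^ d := by
    rcases eq_or_ne m 0 with hm0 | hm0
    · have hS0 : μH[(d:ℝ)] S = 0 := by rw [← hm]; exact hm0
      have hB0 : μH[(d:ℝ)] B = 0 :=
        le_antisymm (hS0 ▸ measure_mono hBsubS) (by simp)
      rw [hσB_eq, hB0, mul_zero, ENNReal.toReal_zero]
      positivity
    · have h := ENNReal.toReal_mono (ENNReal.mul_ne_top (ENNReal.inv_ne_top.mpr hm0)
        (ENNReal.mul_ne_top hAtop ENNReal.ofReal_ne_top)) hσB_le_e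
      rw [ENNReal.toReal_mul, ENNReal.toReal_mul, ENNReal.toReal_ofReal (by positivity)] at h
      calc (sphereSigma d B).toReal ≤ m⁻¹.toReal * (A.toReal * ε ^ d) := h
        _ = Areal * ε ^ d := by rw [hArealdef, ENNReal.toReal_mul]; ring
  -- reflection
  set R := Submodule.reflection (ℝ ∙ x₀) with hRdef
  have hx₀x₀ : ⟪x₀, x₀⟫_ℝ = 1 := by
    rw [real_inner_self_eq_norm_sq, hx₀]; norm_num
  have hRap : ∀ z, R z = (2 * ⟪x₀, z⟫_ℝ) • x₀ - z := by
    intro z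
    rw [hRdef, Submodule.reflection_apply, Submodule.starProjection_singleton, hx₀]
    norm_num
    rw [two_smul]
    module
  have hRinner : ∀ z y, ⟪R z, y⟫_ℝ = 2 * ⟪x₀, z⟫_ℝ * ⟪x₀, y⟫_ℝ - ⟪z, y⟫_ℝ := by
    intro z y
    rw [hRap, inner_sub_left, real_inner_smul_left]
  have hRnorm : ∀ z, ‖R z‖ = ‖z‖ := fun z => R.norm_map z
  have hRx₀inner : ∀ z, ⟪R z, x₀⟫_ℝ = ⟪z, x₀⟫_ℝ := by
    intro z
    rw [hRinner, hx₀x₀, real_inner_comm z x₀]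
    ring
  have hRS : R ⁻¹' S = S := by
    ext z
    simp only [Set.mem_preimage, hSdef, mem_sphere_zero_iff_norm, hRnorm]
  have hRB : R ⁻¹' B = B := by
    ext z
    simp only [Set.mem_preimage, hBdef, Set.mem_setOf_eq, mem_sphere_zero_iff_norm,
      hRnorm, hRx₀inner]
  have hmeasR : Measurable R := R.toHomeomorph.continuous.measurable
  have hmp : MeasurePreserving R (sphereSigma d) (sphereSigma d) := by
    refine ⟨hmeasR, ?_⟩
    rw [sphereSigma, Measure.map_smul]
    congr 1
    calc Measure.map R ((μH[(d:ℝ)]).restrict S)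
        = Measure.map R ((μH[(d:ℝ)]).restrict (R ⁻¹' S)) := by rw [hRS]
      _ = (Measure.map R (μH[(d:ℝ)])).restrict S := (Measure.restrict_map hmeasR hSmeas).symm
      _ = (μH[(d:ℝ)]).restrict S := by
          have h1 : Measure.map (⇑R)
              (μH[(d:ℝ)] : Measure (EuclideanSpace ℝ (Fin (d+1)))) = μH[(d:ℝ)] :=
            R.toIsometryEquiv.map_hausdorffMeasure _
          rw [h1]
  have hemb : MeasurableEmbedding R := R.toHomeomorph.measurableEmbedding
  -- pointwise estimates on B
  have hmemfacts : ∀ x ∈ B, ‖x‖ = 1 ∧ ⟪x, y₀⟫_ℝ ≤ β ∧ ⟪R x, y₀⟫_ℝ ≤ β ∧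
      (1 - ⟪x, x₀⟫_ℝ ≤ ε^2/2) ∧ ⟪x, x₀⟫_ℝ ≤ 1 := by
    rintro x ⟨hxS, hxθ⟩
    have hxn : ‖x‖ = 1 := by rwa [mem_sphere_zero_iff_norm] at hxS
    have hcabs : |⟪x, x₀⟫_ℝ| ≤ 1 := by
      have h := abs_real_inner_le_norm x x₀
      rw [hxn, hx₀] at h; simpa using h
    have hCS := inner_decomp_bound hxn hx₀ hy₀
    rw [← ht₀def] at hCS
    have hcombo := cos_combo_le hcabs ht₀abs (le_trans hxθ.le hεθ)
    rw [← hθ₀def, ← hβdef] at hcombo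
    have h2 := (abs_le.mp hCS).2
    have h1 := (abs_le.mp hCS).1
    have hax : ⟪x, y₀⟫_ℝ ≤ β := by linarith
    have hbx : ⟪R x, y₀⟫_ℝ ≤ β := by
      have hR := hRinner x y₀
      rw [← real_inner_comm x₀ x, ← ht₀def] at hR
      linarith [hR, h1, hcombo]
    have hcx : 1 - ⟪x, x₀⟫_ℝ ≤ ε^2/2 := by
      have hc1 : Real.cos (Real.arccos ⟪x, x₀⟫_ℝ) = ⟪x, x₀⟫_ℝ :=
        Real.cos_arccos (abs_le.mp hcabs).1 (abs_le.mp hcabs).2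
      have hb2 := Real.one_sub_sq_div_two_le_cos (x := Real.arccos ⟪x, x₀⟫_ℝ)
      rw [hc1] at hb2
      have hnn := Real.arccos_nonneg ⟪x, x₀⟫_ℝ
      nlinarith [hxθ]
    exact ⟨hxn, hax, hbx, hcx, (abs_le.mp hcabs).2⟩
  have hK₀ : rieszK s x₀ y₀ = (1/s) * (2 - 2*t₀) ^ (-s/2) := rieszK_eq_inner s hx₀ hy₀
  have hpoint : ∀ x ∈ B, 2 * rieszK s x₀ y₀ - ε^2 * W ≤
      rieszK s x y₀ + rieszK s (R x) y₀ := by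
    intro x hx
    obtain ⟨hxn, hax, hbx, hcx, hc1⟩ := hmemfacts x hx
    have hRxn : ‖R x‖ = 1 := by rw [hRnorm]; exact hxn
    rw [hK₀, rieszK_eq_inner s hxn hy₀, rieszK_eq_inner s hRxn hy₀, hWdef]
    have hab : ⟪x, y₀⟫_ℝ + ⟪R x, y₀⟫_ℝ = 2 * ⟪x, x₀⟫_ℝ * t₀ := by
      have hR := hRinner x y₀
      rw [← real_inner_comm x₀ x, ← ht₀def] at hR
      rw [hR]; ring
    exact key_real s hs0 hab hax hbx ht₀β hβlt hc1 hcx (abs_le.mp ht₀abs).2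
  -- integrability
  set M : ℝ := (1/s) * (2 - 2*β) ^ (-s/2) with hMdef
  have hbound : ∀ f : EuclideanSpace ℝ (Fin (d+1)) → ℝ,
      (∀ x ∈ B, f x = (1/s) * (2 - 2*⟪x, y₀⟫_ℝ) ^ (-s/2) ∧ ⟪x, y₀⟫_ℝ ≤ β) →
      ∀ x ∈ B, ‖f x‖ ≤ M := by
    intro f hf x hx
    obtain ⟨hfx, haβ⟩ := hf x hx
    have h2β : (0:ℝ) < 2 - 2*β := by linarith
    have hmono : (2 - 2*⟪x, y₀⟫_ℝ) ^ (-s/2) ≤ (2 - 2*β) ^ (-s/2) :=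
      Real.rpow_le_rpow_of_nonpos h2β (by linarith) (by linarith)
    rw [hfx, Real.norm_eq_abs,
      abs_of_nonneg (mul_nonneg (by positivity) (Real.rpow_nonneg (by linarith) _))]
    rw [hMdef]
    have : (0:ℝ) ≤ 1/s := by positivity
    nlinarith [hmono]
  have hKcont : ContinuousOn (fun x => rieszK s x y₀) B := by
    have hne : ∀ x ∈ B, ‖x - y₀‖ ≠ 0 ∨ 0 ≤ -s := by
      intro x hx
      left
      obtain ⟨hxn, hax, _, _, _⟩ := hmemfacts x hx
      have h : ‖x - y₀‖^(2:ℕ) = 2 - 2*⟪x, y₀⟫_ℝ := by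
        rw [@norm_sub_sq_real, hxn, hy₀]; ring
      intro h0
      rw [h0] at h
      rw [show ((0:ℝ))^(2:ℕ) = 0 from by norm_num] at h
      linarith [hax, hβlt]
    have hc : ContinuousOn (fun x : EuclideanSpace ℝ (Fin (d+1)) => ‖x - y₀‖) B :=
      ((continuous_id.sub continuous_const).norm).continuousOn
    exact (hc.rpow_const hne).const_smul (1/s)
  have hKRcont : ContinuousOn (fun x => rieszK s (R x) y₀) B := by
    apply ContinuousOn.comp hKcont R.toHomeomorph.continuous.continuousOn
    intro x hx
    have : x ∈ R ⁻¹' B := by rw [hRB]; exact hx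
    exact this
  have hint1 : IntegrableOn (fun x => rieszK s x y₀) B (sphereSigma d) := by
    refine ⟨hKcont.aestronglyMeasurable hBmeas, ?_⟩
    apply HasFiniteIntegral.restrict_of_bounded (C := M) hσB_ne_top.lt_top
    apply (ae_restrict_iff' hBmeas).mpr
    apply ae_of_all
    apply hbound
    intro x hx
    obtain ⟨hxn, hax, _, _, _⟩ := hmemfacts x hx
    exact ⟨rieszK_eq_inner s hxn hy₀, hax⟩
  have hint2 : IntegrableOn (fun x => rieszK s (R x) y₀) B (sphereSigma d) := by
    refine ⟨hKRcont.aestronglyMeasurable hBmeas, ?_⟩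
    apply HasFiniteIntegral.restrict_of_bounded (C := M) hσB_ne_top.lt_top
    apply (ae_restrict_iff' hBmeas).mpr
    apply ae_of_all
    intro x hx
    obtain ⟨hxn, hax, hbx, _, _⟩ := hmemfacts x hx
    have hRxn : ‖R x‖ = 1 := by rw [hRnorm]; exact hxn
    have h2β : (0:ℝ) < 2 - 2*β := by linarith
    have hmono : (2 - 2*⟪R x, y₀⟫_ℝ) ^ (-s/2) ≤ (2 - 2*β) ^ (-s/2) :=
      Real.rpow_le_rpow_of_nonpos h2β (by linarith) (by linarith)
    rw [rieszK_eq_inner s hRxn hy₀, Real.norm_eq_abs,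
      abs_of_nonneg (mul_nonneg (by positivity) (Real.rpow_nonneg (by linarith) _)), hMdef]
    have : (0:ℝ) ≤ 1/s := by positivity
    nlinarith [hmono]
  -- integral estimates
  have hconst : IntegrableOn (fun _ => 2 * rieszK s x₀ y₀ - ε^2 * W) B (sphereSigma d) :=
    (integrableOn_const_iff).mpr (Or.inr hσB_ne_top.lt_top)
  have hIle : ∫ x in B, (2 * rieszK s x₀ y₀ - ε^2 * W) ∂(sphereSigma d) ≤
      ∫ x in B, (rieszK s x y₀ + rieszK s (R x) y₀) ∂(sphereSigma d) :=
    setIntegral_mono_on hconst (hint1.add hint2) hBmeas hpoint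
  have hconstval : ∫ x in B, (2 * rieszK s x₀ y₀ - ε^2 * W) ∂(sphereSigma d) =
      (sphereSigma d B).toReal * (2 * rieszK s x₀ y₀ - ε^2 * W) := by
    rw [setIntegral_const, smul_eq_mul]; rfl
  have hsplit : ∫ x in B, (rieszK s x y₀ + rieszK s (R x) y₀) ∂(sphereSigma d) =
      (∫ x in B, rieszK s x y₀ ∂(sphereSigma d)) +
      (∫ x in B, rieszK s (R x) y₀ ∂(sphereSigma d)) :=
    integral_add hint1 hint2
  have hswap : ∫ x in B, rieszK s (R x) y₀ ∂(sphereSigma d) =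
      ∫ x in B, rieszK s x y₀ ∂(sphereSigma d) := by
    have h := hmp.setIntegral_preimage_emb hemb (fun x => rieszK s x y₀) B
    rwa [hRB] at h
  -- final arithmetic
  set I : ℝ := ∫ x in B, rieszK s x y₀ ∂(sphereSigma d) with hIdef
  set σr : ℝ := (sphereSigma d B).toReal with hσrdef
  have hσr0 : 0 ≤ σr := ENNReal.toReal_nonneg
  have hmain : σr * (2 * rieszK s x₀ y₀ - ε^2 * W) ≤ 2 * I := by
    rw [hsplit, hswap] at hIle
    rw [← hconstval]
    linarith [hIle]
  have hpow : ε ^ (d + 2) = ε ^ d * ε ^ 2 := by rw [pow_add]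
  have hεd : (0:ℝ) ≤ ε ^ d := by positivity
  have hkey : (Areal / (2*(2*(d:ℝ)-2-s)) + 1) * (s + 2 - 2 * (d:ℝ)) * W * ε ^ (d+2) ≤
      - (σr * ε^2 * W / 2) := by
    have h1 : σr * ε^2 * W ≤ Areal * ε^d * ε^2 * W := by
      have hh := mul_le_mul_of_nonneg_right hσB_toReal
        (mul_nonneg (sq_nonneg ε) hWpos.le)
      nlinarith [hh]
    have h2 : (Areal / (2*(2*(d:ℝ)-2-s)) + 1) * (s + 2 - 2 * (d:ℝ)) =
        - ((Areal / (2*(2*(d:ℝ)-2-s)) + 1) * (2*(d:ℝ)-2-s)) := by ring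
    have h3 : (Areal / (2*(2*(d:ℝ)-2-s)) + 1) * (2*(d:ℝ)-2-s) = Areal/2 + (2*(d:ℝ)-2-s) := by
      rw [add_mul, one_mul, div_mul_eq_mul_div, mul_div_mul_right _ _ hu.ne']
    rw [h2, h3, hpow]
    have h4 : (Areal/2) * (ε^d * ε^2) * W ≤ (Areal/2 + (2*(d:ℝ)-2-s)) * (ε^d * ε^2) * W := by
      have : (0:ℝ) ≤ ε^d * ε^2 * W := by positivity
      nlinarith [this]
    nlinarith [h1, h4]
  calc σr * rieszK s x₀ y₀ +
        (Areal / (2*(2*(d:ℝ)-2-s)) + 1) * (s + 2 - 2 * (d:ℝ)) * W * ε ^ (d + 2)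
      ≤ σr * rieszK s x₀ y₀ - σr * ε^2 * W / 2 := by linarith [hkey]
    _ ≤ I := by linarith [hmain]
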